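/- Let R = \bigoplus_{n \in \mathbb{Z}} R_n be a Z-graded finite-dimensional algebra over a field k. If the degree-zero component R_0 is a local ring, then R is a local ring. -/

import Mathlib

namespace GordonGreenAux

section LocalAux
variable {A : Type*} [Ring A] [IsLocalRing A]

lemma isUnit_of_left_inv {v b : A} (h : v * b = 1) : IsUnit b := by
  have hid : (b * v) * (b * v) = b * v := by
    rw [mul_assoc b v, ← mul_assoc v b, h, one_mul]
  rcases IsLocalRing.isUnit_or_isUnit_of_add_one
      (a := b * v) (b := 1 - b * v) (by abel) with he | he
  · have h1 : b * v = 1 := he.mul_left_cancel (by rw [hid, mul_one])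
    exact ⟨⟨b, v, h1, h⟩, rfl⟩
  · obtain ⟨u, hu⟩ := he
    have h0 : (1 - b * v) * b = 0 := by
      rw [sub_mul, one_mul, mul_assoc, h, mul_one, sub_self]
    have hb : b = 0 := by
      have : b = ↑u⁻¹ * ((1 - b * v) * b) := by
        rw [← hu, ← mul_assoc, Units.inv_mul, one_mul]
      rw [this, h0, mul_zero]
    have : (0 : A) = 1 := by rw [← h, hb, mul_zero]
    exact absurd this zero_ne_one

lemma isUnit_of_right_inv {b v : A} (h : b * v = 1) : IsUnit b := by
  have hid : (v * b) * (v * b) = v * b := by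
    rw [mul_assoc v b, ← mul_assoc b v, h, one_mul]
  rcases IsLocalRing.isUnit_or_isUnit_of_add_one
      (a := v * b) (b := 1 - v * b) (by abel) with he | he
  · have h1 : v * b = 1 := he.mul_left_cancel (by rw [hid, mul_one])
    exact ⟨⟨b, v, h, h1⟩, rfl⟩
  · obtain ⟨u, hu⟩ := he
    have h0 : b * (1 - v * b) = 0 := by
      rw [mul_sub, mul_one, ← mul_assoc, h, one_mul, sub_self]
    have hb : b = 0 := by
      have : b = (b * (1 - v * b)) * ↑u⁻¹ := by
        rw [← hu, mul_assoc, Units.mul_inv, mul_one]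
      rw [this, h0, zero_mul]
    have : (0 : A) = 1 := by rw [← h, hb, zero_mul]
    exact absurd this zero_ne_one

lemma nonunit_mul_left (r : A) {a : A} (ha : ¬ IsUnit a) : ¬ IsUnit (r * a) := fun h => by
  obtain ⟨u, hu⟩ := h
  exact ha (isUnit_of_left_inv (v := ↑u⁻¹ * r)
    (by rw [mul_assoc, ← hu, Units.inv_mul]))

lemma nonunit_mul_right {a : A} (ha : ¬ IsUnit a) (r : A) : ¬ IsUnit (a * r) := fun h => by
  obtain ⟨u, hu⟩ := h
  exact ha (isUnit_of_right_inv (v := r * ↑u⁻¹)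
    (by rw [← mul_assoc, ← hu, Units.mul_inv]))

lemma nonunit_add {a b : A} (ha : ¬ IsUnit a) (hb : ¬ IsUnit b) : ¬ IsUnit (a + b) := fun h => by
  obtain ⟨u, hu⟩ := h
  rcases IsLocalRing.isUnit_or_isUnit_of_add_one
      (a := ↑u⁻¹ * a) (b := ↑u⁻¹ * b)
      (by rw [← mul_add, ← hu, Units.inv_mul]) with hx | hx
  · refine ha ?_
    have : a = ↑u * (↑u⁻¹ * a) := by rw [← mul_assoc, Units.mul_inv, one_mul]
    rw [this]
    exact (Units.isUnit u).mul hx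
  · refine hb ?_
    have : b = ↑u * (↑u⁻¹ * b) := by rw [← mul_assoc, Units.mul_inv, one_mul]
    rw [this]
    exact (Units.isUnit u).mul hx

lemma exists_prod_nonunits_eq_zero (A : Type*) [Ring A] [IsLocalRing A]
    [IsArtinian A A] [IsNoetherian A A] :
    ∃ t : ℕ, ∀ l : List A, l.length = t → (∀ c ∈ l, ¬ IsUnit c) → l.prod = 0 := by
  classical
  set Pr : ℕ → Set A :=
    fun j => {x | ∃ l : List A, l.length = j ∧ (∀ c ∈ l, ¬ IsUnit c) ∧ l.prod = x} with hPr
  set C : ℕ → Ideal A := fun j => Ideal.span (Pr j) with hC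
  have hstep : ∀ j, C (j+1) ≤ C j := by
    intro j
    apply Ideal.span_le.mpr
    rintro x ⟨l, hlen, hnu, hprod⟩
    match l, hlen, hnu, hprod with
    | c :: l', hlen, hnu, hprod =>
      have hl' : l'.prod ∈ C j :=
        Ideal.subset_span ⟨l', by simpa using hlen,
          fun d hd => hnu d (List.mem_cons_of_mem _ hd), rfl⟩
      have h2 := Ideal.mul_mem_left (C j) c hl'
      rw [← hprod, List.prod_cons]
      exact h2
  have hanti : ∀ i j, i ≤ j → C j ≤ C i := by
    intro i j hij
    induction hij with
    | refl => exact le_rfl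
    | step h ih => exact le_trans (hstep _) ih
  have hmono : Monotone (fun n => OrderDual.toDual (C n)) := fun i j hij => hanti i j hij
  obtain ⟨T, hT⟩ := IsArtinian.monotone_stabilizes (R := A) (M := A)
    ⟨fun n => OrderDual.toDual (C n), hmono⟩
  have hTT : C (T+1) = C T := (hT (T+1) (Nat.le_succ T)).symm
  obtain ⟨s, hs⟩ := IsNoetherian.noetherian (C T : Submodule A A)
  have rep : ∀ (s' : Finset A), C T ≤ Ideal.span (↑s' : Set A) → ∀ x ∈ C T,
      ∃ a : A → A, (∀ j, ¬ IsUnit (a j)) ∧ ∑ j ∈ s', a j * j = x := by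
    intro s' hsp x hx
    rw [← hTT] at hx
    refine Submodule.span_induction ?_ ?_ ?_ ?_ hx
    · rintro g ⟨l, hlen, hnu, hprod⟩
      match l, hlen, hnu, hprod with
      | c :: l', hlen, hnu, hprod =>
        have h0 : l'.prod ∈ C T := Ideal.subset_span ⟨l', by simpa using hlen,
            fun d hd => hnu d (List.mem_cons_of_mem _ hd), rfl⟩
        obtain ⟨f, -, hf⟩ := Submodule.mem_span_finset.mp (hsp h0)
        refine ⟨fun j => c * f j, fun j => nonunit_mul_right (hnu c (List.mem_cons_self (a := c) (l := l'))) _, ?_⟩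
        rw [← hprod, List.prod_cons, ← hf, Finset.mul_sum]
        refine Finset.sum_congr rfl fun j hj => ?_
        dsimp only
        rw [smul_eq_mul, mul_assoc]
    · exact ⟨fun _ => 0, fun j => not_isUnit_zero, by simp⟩
    · rintro x y hx hy ⟨a, ha, hax⟩ ⟨b, hb, hbx⟩
      exact ⟨fun j => a j + b j, fun j => nonunit_add (ha j) (hb j), by
        simp only [add_mul, Finset.sum_add_distrib, hax, hbx]⟩
    · rintro r x hx ⟨a, ha, hax⟩
      exact ⟨fun j => r * a j, fun j => nonunit_mul_left r (ha j), by
        rw [smul_eq_mul, ← hax, Finset.mul_sum]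
        exact Finset.sum_congr rfl fun j hj => by dsimp only; rw [mul_assoc]⟩
  have removal : ∀ (n : ℕ) (s' : Finset A), s'.card = n → (↑s' : Set A) ⊆ (C T : Set A) →
      C T ≤ Ideal.span (↑s' : Set A) → C T = ⊥ := by
    intro n
    induction n with
    | zero =>
      intro s' hcard _ hle
      rw [Finset.card_eq_zero.mp hcard] at hle
      exact le_bot_iff.mp (by simpa using hle)
    | succ n ih =>
      intro s' hcard hsub hle
      obtain ⟨x, hx⟩ := Finset.card_pos.mp (show 0 < s'.card by omega)
      obtain ⟨a, ha, hsum⟩ := rep s' hle x (hsub hx)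
      have hsum' : a x * x + ∑ j ∈ s'.erase x, a j * j = x := by
        exact (Finset.add_sum_erase s' (fun j => a j * j) hx).trans hsum
      have hunit : IsUnit (1 - a x) := by
        by_contra hnu
        exact (nonunit_add (ha x) hnu) (by simp)
      obtain ⟨u, hu⟩ := hunit
      have hxmem : x ∈ Ideal.span (↑(s'.erase x) : Set A) := by
        have h2 : (1 - a x) * x = ∑ j ∈ s'.erase x, a j * j := by
          rw [sub_mul, one_mul]
          exact sub_eq_of_eq_add' hsum'.symm
        have hmem : ∑ j ∈ s'.erase x, a j * j ∈ Ideal.span (↑(s'.erase x) : Set A) :=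
          Submodule.sum_mem _ fun j hj => Ideal.mul_mem_left _ _ (Ideal.subset_span hj)
        have hx2 : x = ↑u⁻¹ * ((1 - a x) * x) := by
          rw [← hu, ← mul_assoc, Units.inv_mul, one_mul]
        have h3 : ↑u⁻¹ * ((1 - a x) * x) ∈ Ideal.span (↑(s'.erase x) : Set A) := by
          rw [h2]; exact Ideal.mul_mem_left _ _ hmem
        rwa [← hx2] at h3
      have hle' : C T ≤ Ideal.span (↑(s'.erase x) : Set A) := by
        refine hle.trans (Ideal.span_le.mpr ?_)
        intro y hy
        rcases eq_or_ne y x with rfl | hne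
        · exact hxmem
        · exact Ideal.subset_span (Finset.mem_erase.mpr ⟨hne, hy⟩)
      exact ih (s'.erase x) (by rw [Finset.card_erase_of_mem hx]; omega)
        (fun y hy => hsub (Finset.mem_of_mem_erase hy)) hle'
  have hbot : C T = ⊥ := removal s.card s rfl (hs ▸ Submodule.subset_span) hs.ge
  refine ⟨T, fun l hlen hnu => ?_⟩
  have : l.prod ∈ C T := Ideal.subset_span ⟨l, hlen, hnu, rfl⟩
  rw [hbot] at this
  simpa using this

end LocalAux

section Graded
open DirectSum

variable {k R : Type*} [Field k] [Ring R] [Algebra k R]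
variable (ℛ : ℤ → Submodule k R) [GradedRing ℛ]

/-- The set of elements of `R` lying in grade zero which are nonunits of the grade-zero ring. -/
def Mset : Set R := {x : R | ∃ h : x ∈ ℛ 0, ¬ IsUnit (⟨x, h⟩ : ℛ 0)}

lemma Mset_subset {x : R} (h : x ∈ Mset ℛ) : x ∈ ℛ 0 := h.1

lemma nontrivial_R [IsLocalRing (ℛ 0)] : Nontrivial R := by
  refine ⟨1, 0, fun h01 => ?_⟩
  have : (1 : (ℛ 0)) = 0 := Subtype.ext (by simpa using h01)
  exact one_ne_zero this

lemma zero_mem_Mset [IsLocalRing (ℛ 0)] : (0 : R) ∈ Mset ℛ := by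
  refine ⟨(ℛ 0).zero_mem, ?_⟩
  have h : (⟨0, (ℛ 0).zero_mem⟩ : ℛ 0) = 0 := rfl
  rw [h]
  exact not_isUnit_zero

lemma mul_mem_Mset_left [IsLocalRing (ℛ 0)] {x y : R} (hx : x ∈ ℛ 0) (hy : y ∈ Mset ℛ) :
    x * y ∈ Mset ℛ := by
  obtain ⟨hy0, hnu⟩ := hy
  have hxy : x * y ∈ ℛ 0 := by simpa using SetLike.mul_mem_graded hx hy0
  refine ⟨hxy, ?_⟩
  have h : (⟨x * y, hxy⟩ : ℛ 0) = ⟨x, hx⟩ * ⟨y, hy0⟩ := rfl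
  rw [h]
  exact nonunit_mul_left _ hnu

lemma mul_mem_Mset_right [IsLocalRing (ℛ 0)] {x y : R} (hx : x ∈ Mset ℛ) (hy : y ∈ ℛ 0) :
    x * y ∈ Mset ℛ := by
  obtain ⟨hx0, hnu⟩ := hx
  have hxy : x * y ∈ ℛ 0 := by simpa using SetLike.mul_mem_graded hx0 hy
  refine ⟨hxy, ?_⟩
  have h : (⟨x * y, hxy⟩ : ℛ 0) = ⟨x, hx0⟩ * ⟨y, hy⟩ := rfl
  rw [h]
  exact nonunit_mul_right hnu _

/-- products of `t` elements of `Mset` vanish, for some uniform `t`. -/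
lemma exists_Mset_prod_zero [IsLocalRing (ℛ 0)] [FiniteDimensional k R] :
    ∃ t : ℕ, ∀ l : List R, l.length = t → (∀ c ∈ l, c ∈ Mset ℛ) → l.prod = 0 := by
  haveI : IsScalarTower k (ℛ 0) (ℛ 0) :=
    ⟨fun c a b => Subtype.ext (smul_mul_assoc c (a : R) (b : R))⟩
  haveI : IsArtinian (ℛ 0) (ℛ 0) := isArtinian_of_tower k inferInstance
  haveI : IsNoetherian (ℛ 0) (ℛ 0) := isNoetherian_of_tower k inferInstance
  obtain ⟨t, ht⟩ := exists_prod_nonunits_eq_zero (ℛ 0)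
  refine ⟨t, fun l hlen hmem => ?_⟩
  suffices h : ∀ l : List R, (∀ c ∈ l, c ∈ Mset ℛ) → ∃ l' : List (ℛ 0),
      l'.length = l.length ∧ (∀ c ∈ l', ¬ IsUnit c) ∧ (l'.prod : R) = l.prod by
    obtain ⟨l', h1, h2, h3⟩ := h l hmem
    rw [← h3, ht l' (h1.trans hlen) h2]
    exact ZeroMemClass.coe_zero _
  intro l
  induction l with
  | nil => exact fun _ => ⟨[], rfl, by simp, by simp⟩
  | cons c tl ih =>
    intro hm
    obtain ⟨h0, hnu⟩ := hm c (List.mem_cons_self (a := c) (l := tl))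
    obtain ⟨tl', ht1, ht2, ht3⟩ := ih (fun d hd => hm d (List.mem_cons_of_mem _ hd))
    refine ⟨⟨c, h0⟩ :: tl', by simp [ht1], ?_, ?_⟩
    · intro d hd
      rcases List.mem_cons.mp hd with rfl | hd
      · exact hnu
      · exact ht2 d hd
    · rw [List.prod_cons, List.prod_cons]
      have : ((⟨c, h0⟩ * tl'.prod : ℛ 0) : R) = c * (tl'.prod : R) := rfl
      rw [this, ht3]

lemma homog_nilpotent [FiniteDimensional k R] {n : ℤ} (hn : n ≠ 0) {x : R} (hx : x ∈ ℛ n) :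
    ∃ N : ℕ, x ^ N = 0 := by
  classical
  have hV : Set.Finite {m : ℤ | ℛ m ≠ ⊥} :=
    Submodule.finite_ne_bot_of_iSupIndep (DirectSum.Decomposition.isInternal ℛ).submodule_iSupIndep
  set B := hV.toFinset.sup (fun m => m.natAbs) with hB
  refine ⟨B + 1, ?_⟩
  have h1 : x ^ (B + 1) ∈ ℛ ((B + 1 : ℕ) • n) := SetLike.pow_mem_graded _ hx
  have h2 : ℛ ((B + 1 : ℕ) • n) = ⊥ := by
    by_contra hne
    have hmem : ((B + 1 : ℕ) • n) ∈ hV.toFinset := hV.mem_toFinset.mpr hne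
    have hle := Finset.le_sup (f := fun m : ℤ => m.natAbs) hmem
    have h3 : ((B + 1 : ℕ) • n).natAbs = (B + 1) * n.natAbs := by
      rw [nsmul_eq_mul, Int.natAbs_mul, Int.natAbs_natCast]
    have h4 : 0 < n.natAbs := Int.natAbs_pos.mpr hn
    have hle' : (B + 1) * n.natAbs ≤ B := by rw [← h3]; exact hle
    have hge : B + 1 ≤ (B + 1) * n.natAbs := Nat.le_mul_of_pos_right _ h4
    omega
  rw [h2] at h1
  simpa using h1

lemma pow_mul_pow_eq_one {S : Type*} [Monoid S] {x c : S} (h : x * c = 1) :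
    ∀ m : ℕ, x ^ m * c ^ m = 1
  | 0 => by simp
  | m + 1 => by
    rw [pow_succ x, pow_succ' c, mul_assoc (x ^ m), ← mul_assoc x c, h, one_mul,
      pow_mul_pow_eq_one h m]

lemma mul_opp_deg_mem_Mset [IsLocalRing (ℛ 0)] [FiniteDimensional k R] {n : ℤ} (hn : n ≠ 0)
    {x y : R} (hx : x ∈ ℛ n) (hy : y ∈ ℛ (-n)) : x * y ∈ Mset ℛ := by
  haveI := nontrivial_R ℛ
  have h0 : x * y ∈ ℛ 0 := by simpa using SetLike.mul_mem_graded hx hy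
  refine ⟨h0, fun hu => ?_⟩
  obtain ⟨u, hu'⟩ := hu
  set w : R := ((↑(u⁻¹) : ℛ 0) : R) with hw
  have h1 : (x * y) * w = 1 := by
    have h3 : (⟨x * y, h0⟩ : ℛ 0) * ↑u⁻¹ = 1 := by rw [← hu', Units.mul_inv]
    have h2 : ((⟨x * y, h0⟩ * u⁻¹ : ℛ 0) : R) = (x * y) * w := rfl
    rw [← h2, h3]
    rfl
  have hxc : x * (y * w) = 1 := by rw [← mul_assoc]; exact h1
  obtain ⟨N, hN⟩ := homog_nilpotent ℛ hn hx
  have := pow_mul_pow_eq_one hxc N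
  rw [hN, zero_mul] at this
  exact zero_ne_one this

/-- admissible factors: either a nonunit of grade zero, or homogeneous of nonzero degree. -/
def OKp (p : ℤ × R) : Prop := (p.1 = 0 ∧ p.2 ∈ Mset ℛ) ∨ (p.1 ≠ 0 ∧ p.2 ∈ ℛ p.1)

lemma OKp.mem {p : ℤ × R} (h : OKp ℛ p) : p.2 ∈ ℛ p.1 := by
  rcases h with ⟨h1, h2⟩ | ⟨_, h2⟩
  · rw [h1]; exact Mset_subset ℛ h2
  · exact h2

lemma seg_prod_mem_Mset [IsLocalRing (ℛ 0)] [FiniteDimensional k R] :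
    ∀ l : List (ℤ × R), l ≠ [] → (∀ p ∈ l, OKp ℛ p) → (l.map Prod.fst).sum = 0 →
      (l.map Prod.snd).prod ∈ Mset ℛ := by
  intro l
  induction l with
  | nil => simp
  | cons p tl ih =>
    intro _ hOK hsum
    rw [List.map_cons, List.sum_cons] at hsum
    rw [List.map_cons, List.prod_cons]
    rcases hOK p (List.mem_cons_self (a := p) (l := tl)) with ⟨h1, h2⟩ | ⟨h1, h2⟩
    · rcases eq_or_ne tl [] with rfl | hne
      · simpa using h2
      · have hsum' : (tl.map Prod.fst).sum = 0 := by rw [h1, zero_add] at hsum; exact hsum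
        have htl := ih hne (fun q hq => hOK q (List.mem_cons_of_mem _ hq)) hsum'
        exact mul_mem_Mset_left ℛ (Mset_subset ℛ h2) htl
    · have hne : tl ≠ [] := by
        rintro rfl
        simp only [List.map_nil, List.sum_nil, add_zero] at hsum
        exact h1 hsum
      have htl : (tl.map Prod.snd).prod ∈ ℛ ((tl.map Prod.fst).sum) :=
        SetLike.list_prod_map_mem_graded _ _ _ (fun q hq => (hOK q (List.mem_cons_of_mem _ hq)).mem ℛ)
      have hsum' : (tl.map Prod.fst).sum = -p.1 := by omega
      rw [hsum'] at htl
      exact mul_opp_deg_mem_Mset ℛ h1 h2 htl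

lemma chain_extract [IsLocalRing (ℛ 0)] [FiniteDimensional k R] (l : List (ℤ × R))
    (hOK : ∀ p ∈ l, OKp ℛ p) (y : ℤ) :
    ∀ (js' : List ℕ) (j0 : ℕ), List.Chain (· < ·) j0 js' →
      (∀ j ∈ j0 :: js', j ≤ l.length ∧ ((l.take j).map Prod.fst).sum = y) →
      ∃ ms : List R, ms.length = js'.length ∧ (∀ x ∈ ms, x ∈ Mset ℛ) ∧
        ((l.drop j0).map Prod.snd).prod =
          ms.prod * ((l.drop (js'.getLastD j0)).map Prod.snd).prod := by
  intro js'
  induction js' with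
  | nil => exact fun j0 _ _ => ⟨[], rfl, by simp, by simp⟩
  | cons j1 js'' ih =>
    intro j0 hchain hmem
    obtain ⟨h01, hchain'⟩ := List.chain_cons.mp hchain
    have hj1len : j1 ≤ l.length := (hmem j1 (List.mem_cons_of_mem _ (List.mem_cons_self))).1
    have hstep : ∃ m ∈ Mset ℛ,
        ((l.drop j0).map Prod.snd).prod = m * ((l.drop j1).map Prod.snd).prod := by
      set seg := (l.drop j0).take (j1 - j0) with hseg
      have hsplit : l.drop j0 = seg ++ l.drop j1 := by
        rw [hseg]
        conv_lhs => rw [← List.take_append_drop (j1 - j0) (l.drop j0)]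
        rw [List.drop_drop]
        have hdd : j0 + (j1 - j0) = j1 := by omega
        rw [hdd]
      have hseg_ne : seg ≠ [] := by
        have hlen : seg.length = min (j1 - j0) (l.length - j0) := by
          rw [hseg, List.length_take, List.length_drop]
        intro h
        rw [h] at hlen
        simp only [List.length_nil] at hlen
        omega
      have htake : l.take j1 = l.take j0 ++ seg := by
        rw [hseg, ← List.take_add]
        congr 1
        omega
      have hseg_sum : (seg.map Prod.fst).sum = 0 := by
        have e0 := (hmem j0 (List.mem_cons_self)).2
        have e1 := (hmem j1 (List.mem_cons_of_mem _ (List.mem_cons_self))).2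
        rw [htake, List.map_append, List.sum_append, e0] at e1
        omega
      have hsegOK : ∀ p ∈ seg, OKp ℛ p := fun p hp =>
        hOK p (List.drop_subset _ _ (List.take_subset _ _ hp))
      have hM := seg_prod_mem_Mset ℛ seg hseg_ne hsegOK hseg_sum
      exact ⟨_, hM, by rw [hsplit, List.map_append, List.prod_append]⟩
    obtain ⟨m, hm, heq⟩ := hstep
    obtain ⟨ms, hmslen, hmsM, hms⟩ := ih j1 hchain'
      (fun j hj => hmem j (List.mem_cons_of_mem _ hj))
    refine ⟨m :: ms, by simp [hmslen], ?_, ?_⟩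
    · intro x hx
      rcases List.mem_cons.mp hx with rfl | hx
      · exact hm
      · exact hmsM x hx
    · rw [heq, hms, List.prod_cons, mul_assoc, List.getLastD_cons]

lemma big [IsLocalRing (ℛ 0)] [FiniteDimensional k R] :
    ∃ s : ℕ, ∀ l : List (ℤ × R), l.length = s → (∀ p ∈ l, OKp ℛ p) →
      (l.map Prod.snd).prod = 0 := by
  classical
  haveI := nontrivial_R ℛ
  obtain ⟨t, ht⟩ := exists_Mset_prod_zero ℛ
  have hV : Set.Finite {m : ℤ | ℛ m ≠ ⊥} :=
    Submodule.finite_ne_bot_of_iSupIndep (DirectSum.Decomposition.isInternal ℛ).submodule_iSupIndep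
  refine ⟨hV.toFinset.card * t, fun l hlen hOK => ?_⟩
  set s := hV.toFinset.card * t with hs
  set S : ℕ → ℤ := fun j => ((l.take j).map Prod.fst).sum with hS
  have hPmem : ∀ j : ℕ, ((l.take j).map Prod.snd).prod ∈ ℛ (S j) := fun j =>
    SetLike.list_prod_map_mem_graded _ _ _
      (fun q hq => (hOK q (List.take_subset _ _ hq)).mem ℛ)
  have hsplitprod : ∀ j : ℕ, (l.map Prod.snd).prod =
      ((l.take j).map Prod.snd).prod * ((l.drop j).map Prod.snd).prod := by
    intro j
    conv_lhs => rw [← List.take_append_drop j l]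
    rw [List.map_append, List.prod_append]
  by_cases hz : ∃ j ≤ s, ℛ (S j) = ⊥
  · obtain ⟨j, _, hbot⟩ := hz
    have h1 := hPmem j
    rw [hbot] at h1
    have h2 : ((l.take j).map Prod.snd).prod = 0 := by simpa using h1
    rw [hsplitprod j, h2, zero_mul]
  · push_neg at hz
    have hmaps : ∀ j ∈ Finset.range (s + 1), S j ∈ hV.toFinset := fun j hj =>
      hV.mem_toFinset.mpr (hz j (Nat.lt_succ_iff.mp (Finset.mem_range.mp hj)))
    have hcard : hV.toFinset.card * t < (Finset.range (s + 1)).card := by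
      rw [Finset.card_range]
      omega
    obtain ⟨y, _, hfib⟩ := Finset.exists_lt_card_fiber_of_mul_lt_card_of_maps_to hmaps hcard
    set F := (Finset.range (s + 1)).filter (fun j => S j = y) with hF
    have hlenF : t + 1 ≤ (F.sort (· ≤ ·)).length := by
      rw [Finset.length_sort]
      omega
    set js : List ℕ := (F.sort (· ≤ ·)).take (t + 1) with hjs
    have hjs_sorted : js.Pairwise (· < ·) :=
      (Finset.sortedLT_sort F).pairwise.sublist (List.take_sublist _ _)
    have hjs_len : js.length = t + 1 := by
      rw [hjs, List.length_take]
      omega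
    have hjs_mem : ∀ j ∈ js, j ≤ l.length ∧ S j = y := by
      intro j hj
      have hjF : j ∈ F := (Finset.mem_sort (α := ℕ) (· ≤ ·)).mp (List.take_subset _ _ hj)
      rw [hF, Finset.mem_filter, Finset.mem_range] at hjF
      exact ⟨by omega, hjF.2⟩
    obtain ⟨j0, js', hcons⟩ := List.exists_cons_of_ne_nil
      (List.ne_nil_of_length_pos (by omega) : js ≠ [])
    have hchain : List.Chain (· < ·) j0 js' := by
      have := List.isChain_iff_pairwise.mpr (hcons ▸ hjs_sorted)
      exact this
    obtain ⟨ms, hmslen, hmsM, hmseq⟩ := chain_extract ℛ l hOK y js' j0 hchain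
      (by rw [← hcons]; exact hjs_mem)
    have hms0 : ms.prod = 0 := by
      apply ht ms _ hmsM
      have : js'.length = t := by
        have := hjs_len
        rw [hcons] at this
        simpa using this
      rw [hmslen, this]
    rw [hsplitprod j0, hmseq, hms0, zero_mul, mul_zero]


/-- The span of homogeneous elements of nonzero degree. -/
def NZ : Set R := {x : R | ∃ n : ℤ, n ≠ 0 ∧ x ∈ ℛ n}

lemma nz_decomp {z : R} (hz : z ∈ Submodule.span k (NZ ℛ)) :
    ∃ l : List (ℤ × R), (∀ p ∈ l, p.1 ≠ 0 ∧ p.2 ∈ ℛ p.1) ∧ (l.map Prod.snd).sum = z := by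
  refine Submodule.span_induction ?_ ?_ ?_ ?_ hz
  · rintro x ⟨n, hn, hx⟩
    exact ⟨[(n, x)], by simp [hn, hx], by simp⟩
  · exact ⟨[], by simp, by simp⟩
  · rintro x y _ _ ⟨lx, h1, h2⟩ ⟨ly, h3, h4⟩
    refine ⟨lx ++ ly, ?_, by simp [h2, h4]⟩
    intro p hp
    rcases List.mem_append.mp hp with hp | hp
    · exact h1 p hp
    · exact h3 p hp
  · rintro c x _ ⟨lx, h1, h2⟩
    refine ⟨lx.map (fun p => (p.1, c • p.2)), ?_, ?_⟩
    · intro p hp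
      rw [List.mem_map] at hp
      obtain ⟨q, hq, rfl⟩ := hp
      exact ⟨(h1 q hq).1, Submodule.smul_mem _ _ (h1 q hq).2⟩
    · rw [List.map_map]
      show (lx.map (fun p : ℤ × R => c • p.2)).sum = c • x
      rw [← h2, List.smul_sum, List.map_map]
      rfl

lemma decompose_zero_coe_eq_zero_of_nz {y : R} (hy : y ∈ Submodule.span k (NZ ℛ)) :
    (DirectSum.decompose ℛ y 0 : R) = 0 := by
  refine Submodule.span_induction ?_ ?_ ?_ ?_ hy
  · rintro x ⟨n, hn, hx⟩
    exact DirectSum.decompose_of_mem_ne ℛ hx hn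
  · rw [DirectSum.decompose_zero]; rfl
  · intro x y _ _ hx hy
    rw [DirectSum.decompose_add, DirectSum.add_apply]
    push_cast
    rw [hx, hy, add_zero]
  · intro c x _ hx
    rw [DirectSum.decompose_smul, DFinsupp.smul_apply]
    have : ((c • DirectSum.decompose ℛ x 0 : ℛ 0) : R) = c • (DirectSum.decompose ℛ x 0 : R) := rfl
    rw [this, hx, smul_zero]

lemma sub_decompose_zero_mem (a : R) :
    a - ↑(DirectSum.decompose ℛ a 0) ∈ Submodule.span k (NZ ℛ) := by
  have htop : (⊤ : Submodule k R) ≤ (ℛ 0) ⊔ Submodule.span k (NZ ℛ) := by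
    rw [← (DirectSum.Decomposition.isInternal ℛ).submodule_iSup_eq_top]
    refine iSup_le fun n => ?_
    rcases eq_or_ne n 0 with rfl | hn
    · exact le_sup_left
    · refine le_trans ?_ le_sup_right
      intro x hx
      exact Submodule.subset_span ⟨n, hn, hx⟩
  obtain ⟨x, hx, y, hy, hxy⟩ := Submodule.mem_sup.mp (htop (Submodule.mem_top (x := a)))
  have hdy := decompose_zero_coe_eq_zero_of_nz ℛ hy
  have hda : (↑(DirectSum.decompose ℛ a 0) : R) = x := by
    rw [← hxy, DirectSum.decompose_add, DirectSum.add_apply]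
    push_cast
    rw [hdy, add_zero, DirectSum.decompose_of_mem_same ℛ hx]
  have hkey : a - ↑(DirectSum.decompose ℛ a 0) = y := by
    rw [hda, ← hxy]
    abel
  rw [hkey]
  exact hy

lemma list_sum_mul {l : List R} {b : R} : l.sum * b = (l.map (· * b)).sum := by
  induction l with
  | nil => simp
  | cons c tl ih => simp [add_mul, ih]

lemma nilpotent_of_nz [IsLocalRing (ℛ 0)] [FiniteDimensional k R] {z : R}
    (hz : z ∈ Submodule.span k (NZ ℛ)) : IsNilpotent z := by
  obtain ⟨s, hbig⟩ := big ℛ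
  obtain ⟨lz, hlz, hlzsum⟩ := nz_decomp ℛ hz
  set Qs : ℕ → Submodule k R := fun m => Submodule.span k
    {x : R | ∃ l : List (ℤ × R), l.length = m ∧ (∀ p ∈ l, OKp ℛ p) ∧
      (l.map Prod.snd).prod = x} with hQs
  have hz1 : ∀ m : ℕ, ∀ w ∈ Qs m, z * w ∈ Qs (m + 1) := by
    intro m w hw
    refine Submodule.span_induction ?_ ?_ ?_ ?_ hw
    · rintro x ⟨l, hlen, hOK, hprod⟩
      have hzx : z * x = ((lz.map Prod.snd).map (· * x)).sum := by
        rw [← hlzsum, list_sum_mul]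
      rw [hzx]
      refine list_sum_mem ?_
      intro q hq
      rw [List.mem_map] at hq
      obtain ⟨v, hv, rfl⟩ := hq
      rw [List.mem_map] at hv
      obtain ⟨p, hp, rfl⟩ := hv
      refine Submodule.subset_span ⟨p :: l, by simp [hlen], ?_, by rw [List.map_cons, List.prod_cons, hprod]⟩
      intro q hq
      rcases List.mem_cons.mp hq with rfl | hq
      · exact Or.inr (hlz q hp)
      · exact hOK q hq
    · rw [mul_zero]; exact Submodule.zero_mem _
    · intro x y _ _ hx hy
      rw [mul_add]
      exact Submodule.add_mem _ hx hy
    · intro c x _ hx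
      rw [mul_smul_comm]
      exact Submodule.smul_mem _ _ hx
  have hz2 : ∀ m : ℕ, z ^ m ∈ Qs m := by
    intro m
    induction m with
    | zero =>
      rw [pow_zero]
      exact Submodule.subset_span ⟨[], rfl, by simp, by simp⟩
    | succ m ih =>
      rw [pow_succ']
      exact hz1 m _ ih
  refine ⟨s, ?_⟩
  have hQbot : Qs s ≤ ⊥ := by
    rw [hQs]
    refine Submodule.span_le.mpr ?_
    rintro x ⟨l, hlen, hOK, hprod⟩
    simp only [SetLike.mem_coe, Submodule.mem_bot]
    rw [← hprod]
    exact hbig l hlen hOK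
  simpa using hQbot (hz2 s)

lemma nz_mul_left {w : R} (hw : w ∈ ℛ 0) {z : R} (hz : z ∈ Submodule.span k (NZ ℛ)) :
    w * z ∈ Submodule.span k (NZ ℛ) := by
  refine Submodule.span_induction ?_ ?_ ?_ ?_ hz
  · rintro x ⟨n, hn, hx⟩
    exact Submodule.subset_span ⟨n, hn, by simpa using SetLike.mul_mem_graded hw hx⟩
  · rw [mul_zero]; exact Submodule.zero_mem _
  · intro x y _ _ hx hy
    rw [mul_add]; exact Submodule.add_mem _ hx hy
  · intro c x _ hx
    rw [mul_smul_comm]; exact Submodule.smul_mem _ _ hx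

lemma nz_mul_right {w : R} (hw : w ∈ ℛ 0) {z : R} (hz : z ∈ Submodule.span k (NZ ℛ)) :
    z * w ∈ Submodule.span k (NZ ℛ) := by
  refine Submodule.span_induction ?_ ?_ ?_ ?_ hz
  · rintro x ⟨n, hn, hx⟩
    exact Submodule.subset_span ⟨n, hn, by simpa using SetLike.mul_mem_graded hx hw⟩
  · rw [zero_mul]; exact Submodule.zero_mem _
  · intro x y _ _ hx hy
    rw [add_mul]; exact Submodule.add_mem _ hx hy
  · intro c x _ hx
    rw [smul_mul_assoc]; exact Submodule.smul_mem _ _ hx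

lemma isUnit_of_decompose_zero_isUnit [IsLocalRing (ℛ 0)] [FiniteDimensional k R] {a : R}
    (h : IsUnit (DirectSum.decompose ℛ a 0)) : IsUnit a := by
  obtain ⟨u, hu⟩ := h
  set a0 : R := ↑(DirectSum.decompose ℛ a 0) with ha0
  set w : R := ((↑(u⁻¹) : ℛ 0) : R) with hw
  have hy : a - a0 ∈ Submodule.span k (NZ ℛ) := sub_decompose_zero_mem ℛ a
  have hwa0 : w * a0 = 1 := by
    have h1 : ((↑u⁻¹ * ↑u : ℛ 0) : R) = ((1 : ℛ 0) : R) := by rw [u.inv_mul]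
    rw [hw, ha0, ← hu]
    exact h1
  have ha0w : a0 * w = 1 := by
    have h1 : ((↑u * ↑u⁻¹ : ℛ 0) : R) = ((1 : ℛ 0) : R) := by rw [u.mul_inv]
    rw [hw, ha0, ← hu]
    exact h1
  have hl : w * a = 1 + w * (a - a0) := by
    rw [mul_sub, hwa0]
    abel
  have hr : a * w = 1 + (a - a0) * w := by
    rw [sub_mul, ha0w]
    abel
  have hul : IsUnit (w * a) := by
    rw [hl]
    exact (nilpotent_of_nz ℛ (nz_mul_left ℛ (SetLike.coe_mem _) hy)).isUnit_one_add
  have hur : IsUnit (a * w) := by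
    rw [hr]
    exact (nilpotent_of_nz ℛ (nz_mul_right ℛ (SetLike.coe_mem _) hy)).isUnit_one_add
  obtain ⟨e, he⟩ := hul
  obtain ⟨f, hf⟩ := hur
  have hleft : ((↑e⁻¹ : R) * w) * a = 1 := by
    rw [mul_assoc, ← he, Units.inv_mul]
  have hright : a * (w * (↑f⁻¹ : R)) = 1 := by
    rw [← mul_assoc, ← hf, Units.mul_inv]
  have hvv : ((↑e⁻¹ : R) * w) = w * (↑f⁻¹ : R) := by
    calc (↑e⁻¹ : R) * w = ((↑e⁻¹ : R) * w) * (a * (w * (↑f⁻¹ : R))) := by rw [hright, mul_one]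
    _ = (((↑e⁻¹ : R) * w) * a) * (w * (↑f⁻¹ : R)) := (mul_assoc _ a _).symm
    _ = w * (↑f⁻¹ : R) := by rw [hleft, one_mul]
  exact ⟨⟨a, w * (↑f⁻¹ : R), hright, by rw [← hvv]; exact hleft⟩, rfl⟩


end Graded
end GordonGreenAux

/-- Gordon--Green: a `ℤ`-graded finite-dimensional algebra over a field whose degree-zero
component is a local ring is itself a local ring. -/
theorem isLocalRing_of_gradeZero_isLocalRing
    {k R : Type*} [Field k] [Ring R] [Algebra k R]
    (ℛ : ℤ → Submodule k R) [GradedRing ℛ] [FiniteDimensional k R]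
    [IsLocalRing (ℛ 0)] :
    IsLocalRing R := by
  haveI := GordonGreenAux.nontrivial_R ℛ
  refine ⟨fun {a b} hab => ?_⟩
  have hd : DirectSum.decompose ℛ a 0 + DirectSum.decompose ℛ b 0 = 1 := by
    have h1 : DirectSum.decompose ℛ (a + b) 0 =
        DirectSum.decompose ℛ a 0 + DirectSum.decompose ℛ b 0 := by
      rw [DirectSum.decompose_add]
      rfl
    have h2 : DirectSum.decompose ℛ ((1 : R)) 0 = (1 : (ℛ 0)) := by
      refine Subtype.ext ?_
      have := DirectSum.decompose_of_mem_same ℛ (SetLike.one_mem_graded ℛ)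
      simpa using this
    rw [← h1, hab, h2]
  rcases IsLocalRing.isUnit_or_isUnit_of_add_one hd with h | h
  · exact Or.inl (GordonGreenAux.isUnit_of_decompose_zero_isUnit ℛ h)
  · exact Or.inr (GordonGreenAux.isUnit_of_decompose_zero_isUnit ℛ h)
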